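/- For every n ≥ 0, |L_n| = |P_n|: the number of closed lattice walks in L_n equals the number of lattice paths from (0,0) to (2n,n) with steps E=(1,0) and N=(0,1) that never go above the line y = x/2. -/

import Mathlib

/-- Steps of a lattice walk: east, west, north, south. -/
inductive WStep : Type
  | E : WStep
  | W : WStep
  | N : WStep
  | S : WStep
  deriving DecidableEq

/-- The displacement vector of a walk step. -/
def WStep.vec : WStep → ℤ × ℤ
  | .E => (1, 0)
  | .W => (-1, 0)
  | .N => (0, 1)
  | .S => (0, -1)

/-- The position of the walk `w` after its first `i` steps. -/
def wpos (w : List WStep) (i : ℕ) : ℤ × ℤ := ((w.take i).map WStep.vec).sum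

/-- `w` is a closed lattice walk in `L_n`: it has length `2n`, starts and ends at the
origin, every visited point `(x, y)` satisfies `y ≤ x`, and every `N` step is immediately
followed by a (possibly empty) block of consecutive `W` steps and then one `S` step. -/
def IsLWalk (n : ℕ) (w : List WStep) : Prop :=
  w.length = 2 * n ∧ wpos w w.length = 0 ∧
  (∀ i ≤ w.length, (wpos w i).2 ≤ (wpos w i).1) ∧
  (∀ i : ℕ, w[i]? = some WStep.N → ∃ k : ℕ,
    (∀ j < k, w[i + 1 + j]? = some WStep.W) ∧ w[i + 1 + k]? = some WStep.S)

/-- Steps of a lattice path: east `E = (1,0)` and north `N = (0,1)`. -/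
inductive PStep : Type
  | E : PStep
  | N : PStep
  deriving DecidableEq

/-- The displacement vector of a path step. -/
def PStep.vec : PStep → ℤ × ℤ
  | .E => (1, 0)
  | .N => (0, 1)

/-- The position of the path `p` after its first `i` steps. -/
def ppos (p : List PStep) (i : ℕ) : ℤ × ℤ := ((p.take i).map PStep.vec).sum

/-- `p` is a lattice path in `P_n`: it goes from `(0,0)` to `(2n, n)` using steps `E` and
`N`, and every point `(x, y)` on it satisfies `y ≤ x/2`, i.e. `2y ≤ x`. -/
def IsPPath (n : ℕ) (p : List PStep) : Prop :=
  ppos p p.length = ((2 * n : ℤ), (n : ℤ)) ∧ ∀ i ≤ p.length, 2 * (ppos p i).2 ≤ (ppos p i).1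

/-! ### walk-side semantic predicates -/

def vsum (w : List WStep) : ℤ × ℤ := (w.map WStep.vec).sum

@[simp] lemma wpos_zero (w : List WStep) : wpos w 0 = 0 := by simp [wpos]

@[simp] lemma wpos_cons (s : WStep) (w : List WStep) (i : ℕ) :
    wpos (s :: w) (i + 1) = s.vec + wpos w i := by
  simp [wpos, List.take_succ_cons]

lemma wpos_length (w : List WStep) : wpos w w.length = vsum w := by
  simp [wpos, vsum, List.take_length]

@[simp] lemma vsum_nil : vsum ([] : List WStep) = 0 := rfl

@[simp] lemma vsum_cons (s : WStep) (w : List WStep) : vsum (s :: w) = s.vec + vsum w := by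
  simp [vsum]

def pending (w : List WStep) : Prop :=
  ∃ k : ℕ, (∀ j < k, w[j]? = some WStep.W) ∧ w[k]? = some WStep.S

def blockOK (w : List WStep) : Prop :=
  ∀ i : ℕ, w[i]? = some WStep.N → pending (w.drop (i + 1))

@[simp] lemma pending_nil : ¬ pending ([] : List WStep) := by
  rintro ⟨k, -, hS⟩; simp at hS

@[simp] lemma pending_cons_W (w : List WStep) : pending (WStep.W :: w) ↔ pending w := by
  constructor
  · rintro ⟨k, hW, hS⟩
    cases k with
    | zero => simp at hS
    | succ k =>
      exact ⟨k, fun j hj => by simpa using hW (j+1) (by omega), by simpa using hS⟩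
  · rintro ⟨k, hW, hS⟩
    refine ⟨k+1, fun j hj => ?_, by simpa using hS⟩
    cases j with
    | zero => simp
    | succ j => simpa using hW j (by omega)

@[simp] lemma pending_cons_S (w : List WStep) : pending (WStep.S :: w) := ⟨0, by simp, by simp⟩

@[simp] lemma pending_cons_E (w : List WStep) : ¬ pending (WStep.E :: w) := by
  rintro ⟨k, hW, hS⟩
  cases k with
  | zero => simp at hS
  | succ k => have := hW 0 (by omega); simp at this

@[simp] lemma pending_cons_N (w : List WStep) : ¬ pending (WStep.N :: w) := by
  rintro ⟨k, hW, hS⟩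
  cases k with
  | zero => simp at hS
  | succ k => have := hW 0 (by omega); simp at this

lemma blockOK_cons (s : WStep) (w : List WStep) :
    blockOK (s :: w) ↔ (s = WStep.N → pending w) ∧ blockOK w := by
  constructor
  · intro h
    refine ⟨fun hs => ?_, fun i hi => ?_⟩
    · have := h 0 (by simp [hs])
      simpa using this
    · have := h (i+1) (by simpa using hi)
      simpa using this
  · rintro ⟨h0, h⟩ i hi
    cases i with
    | zero =>
      simp only [List.getElem?_cons_zero, Option.some.injEq] at hi
      simpa using h0 hi
    | succ i =>
      simp only [List.getElem?_cons_succ] at hi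
      have := h i hi
      simpa [List.drop_succ_cons] using this

@[simp] lemma blockOK_nil : blockOK ([] : List WStep) := by
  intro i hi; simp at hi

/-- Heights condition: starting at relative height `u`, the walk keeps `y ≤ x`. -/
def Hts (u : ℤ) (w : List WStep) : Prop :=
  ∀ i ≤ w.length, (wpos w i).2 ≤ u + (wpos w i).1

lemma Hts_nonneg {u : ℤ} {w : List WStep} (h : Hts u w) : 0 ≤ u := by
  have := h 0 (Nat.zero_le _)
  simpa using this

lemma Hts_cons (s : WStep) (w : List WStep) (u : ℤ) :
    Hts u (s :: w) ↔ 0 ≤ u ∧ Hts (u + s.vec.1 - s.vec.2) w := by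
  constructor
  · intro h
    refine ⟨Hts_nonneg h, fun i hi => ?_⟩
    have := h (i+1) (by simpa using Nat.succ_le_succ hi)
    rw [wpos_cons] at this
    simp only [Prod.fst_add, Prod.snd_add] at this
    linarith
  · rintro ⟨h0, h⟩ i hi
    cases i with
    | zero => simpa using h0
    | succ i =>
      have := h i (by simpa using Nat.lt_succ_iff.mp (Nat.lt_of_succ_le hi))
      rw [wpos_cons]
      simp only [Prod.fst_add, Prod.snd_add]
      linarith

def WA (u : ℤ) (w : List WStep) : Prop :=
  vsum w = (-u, 0) ∧ Hts u w ∧ blockOK w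

def WB (u : ℤ) (w : List WStep) : Prop :=
  vsum w = (-(u+1), -1) ∧ Hts u w ∧ blockOK w ∧ pending w

/-- key counting fact: under the block condition the net vertical displacement is ≤ 0,
and < 0 if a block is pending. -/
lemma blockOK_snd_le (w : List WStep) (h : blockOK w) :
    (vsum w).2 ≤ 0 ∧ (pending w → (vsum w).2 ≤ -1) := by
  induction w with
  | nil => simp
  | cons s t ih =>
    rw [blockOK_cons] at h
    obtain ⟨hN, ht⟩ := h
    obtain ⟨ih1, ih2⟩ := ih ht
    cases s with
    | E => refine ⟨by simpa [WStep.vec] using ih1, fun hp => absurd hp (by simp)⟩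
    | W =>
      refine ⟨by simpa [WStep.vec] using ih1, fun hp => ?_⟩
      have := ih2 (by simpa using hp)
      simpa [WStep.vec] using this
    | N =>
      have := ih2 (hN rfl)
      refine ⟨by simp [WStep.vec]; omega, fun hp => absurd hp (by simp)⟩
    | S =>
      refine ⟨by simp [WStep.vec]; omega, fun _ => by simp [WStep.vec]; omega⟩

lemma WA_nonneg {u : ℤ} {w : List WStep} (h : WA u w) : 0 ≤ u := Hts_nonneg h.2.1
lemma WB_nonneg {u : ℤ} {w : List WStep} (h : WB u w) : 0 ≤ u := Hts_nonneg h.2.1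

lemma WA_nil (u : ℤ) : WA u [] ↔ u = 0 := by
  constructor
  · rintro ⟨h1, -, -⟩
    have := congrArg Prod.fst h1
    simp at this
    omega
  · rintro rfl
    refine ⟨by simp [Prod.ext_iff], fun i hi => ?_, by simp⟩
    simp at hi; simp [hi]

lemma WB_nil (u : ℤ) : ¬ WB u [] := fun h => pending_nil h.2.2.2

lemma WA_cons_E (u : ℤ) (t : List WStep) : WA u (.E :: t) ↔ 0 ≤ u ∧ WA (u+1) t := by
  unfold WA
  rw [vsum_cons, Hts_cons, blockOK_cons]
  have hv : u + (WStep.E.vec).1 - (WStep.E.vec).2 = u + 1 := by simp [WStep.vec]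
  rw [hv]
  simp only [WStep.vec, Prod.ext_iff, Prod.fst_add, Prod.snd_add]
  constructor
  · rintro ⟨⟨e1, e2⟩, ⟨h0, hh⟩, -, hb⟩
    exact ⟨h0, ⟨by omega, by omega⟩, hh, hb⟩
  · rintro ⟨h0, ⟨e1, e2⟩, hh, hb⟩
    exact ⟨⟨by omega, by omega⟩, ⟨h0, hh⟩, by simp, hb⟩

lemma WA_cons_W (u : ℤ) (t : List WStep) : WA u (.W :: t) ↔ 0 ≤ u ∧ WA (u-1) t := by
  unfold WA
  rw [vsum_cons, Hts_cons, blockOK_cons]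
  have hv : u + (WStep.W.vec).1 - (WStep.W.vec).2 = u - 1 := by simp [WStep.vec]; try omega
  rw [hv]
  simp only [WStep.vec, Prod.ext_iff, Prod.fst_add, Prod.snd_add]
  constructor
  · rintro ⟨⟨e1, e2⟩, ⟨h0, hh⟩, -, hb⟩
    exact ⟨h0, ⟨by omega, by omega⟩, hh, hb⟩
  · rintro ⟨h0, ⟨e1, e2⟩, hh, hb⟩
    exact ⟨⟨by omega, by omega⟩, ⟨h0, hh⟩, by simp, hb⟩

lemma WA_cons_N (u : ℤ) (t : List WStep) : WA u (.N :: t) ↔ 0 ≤ u ∧ WB (u-1) t := by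
  unfold WA WB
  rw [vsum_cons, Hts_cons, blockOK_cons]
  have hv : u + (WStep.N.vec).1 - (WStep.N.vec).2 = u - 1 := by simp [WStep.vec]; try omega
  rw [hv]
  simp only [WStep.vec, Prod.ext_iff, Prod.fst_add, Prod.snd_add]
  constructor
  · rintro ⟨⟨e1, e2⟩, ⟨h0, hh⟩, hp, hb⟩
    exact ⟨h0, ⟨by omega, by omega⟩, hh, hb, hp trivial⟩
  · rintro ⟨h0, ⟨e1, e2⟩, hh, hb, hp⟩
    exact ⟨⟨by omega, by omega⟩, ⟨h0, hh⟩, fun _ => hp, hb⟩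

lemma WA_cons_S (u : ℤ) (t : List WStep) : ¬ WA u (.S :: t) := by
  rintro ⟨h1, -, hb⟩
  rw [blockOK_cons] at hb
  have h2 := (blockOK_snd_le t hb.2).1
  have := congrArg Prod.snd h1
  simp [WStep.vec] at this
  omega

lemma WB_cons_W (u : ℤ) (t : List WStep) : WB u (.W :: t) ↔ 0 ≤ u ∧ WB (u-1) t := by
  unfold WB
  rw [vsum_cons, Hts_cons, blockOK_cons, pending_cons_W]
  have hv : u + (WStep.W.vec).1 - (WStep.W.vec).2 = u - 1 := by simp [WStep.vec]; try omega
  rw [hv]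
  simp only [WStep.vec, Prod.ext_iff, Prod.fst_add, Prod.snd_add]
  constructor
  · rintro ⟨⟨e1, e2⟩, ⟨h0, hh⟩, ⟨-, hb⟩, hp⟩
    exact ⟨h0, ⟨by omega, by omega⟩, hh, hb, hp⟩
  · rintro ⟨h0, ⟨e1, e2⟩, hh, hb, hp⟩
    exact ⟨⟨by omega, by omega⟩, ⟨h0, hh⟩, ⟨by simp, hb⟩, hp⟩

lemma WB_cons_S (u : ℤ) (t : List WStep) : WB u (.S :: t) ↔ 0 ≤ u ∧ WA (u+1) t := by
  unfold WA WB
  rw [vsum_cons, Hts_cons, blockOK_cons]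
  have hv : u + (WStep.S.vec).1 - (WStep.S.vec).2 = u + 1 := by simp [WStep.vec]
  rw [hv]
  simp only [WStep.vec, Prod.ext_iff, Prod.fst_add, Prod.snd_add]
  constructor
  · rintro ⟨⟨e1, e2⟩, ⟨h0, hh⟩, ⟨-, hb⟩, -⟩
    exact ⟨h0, ⟨by omega, by omega⟩, hh, hb⟩
  · rintro ⟨h0, ⟨e1, e2⟩, hh, hb⟩
    exact ⟨⟨by omega, by omega⟩, ⟨h0, hh⟩, ⟨by simp, hb⟩, by simp⟩

lemma WB_cons_E (u : ℤ) (t : List WStep) : ¬ WB u (.E :: t) := fun h => pending_cons_E t h.2.2.2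
lemma WB_cons_N (u : ℤ) (t : List WStep) : ¬ WB u (.N :: t) := fun h => pending_cons_N t h.2.2.2

/-! ### recursive Finsets of valid words -/

def FAB : ℕ → ℤ → Finset (List WStep) × Finset (List WStep)
  | 0, u => (if u = 0 then {([] : List WStep)} else ∅, ∅)
  | (l+1), u =>
    (((FAB l (u+1)).1.image (WStep.E :: ·)) ∪
      (if 1 ≤ u then ((FAB l (u-1)).1.image (WStep.W :: ·)) ∪
        ((FAB l (u-1)).2.image (WStep.N :: ·)) else ∅),
     (if 1 ≤ u then ((FAB l (u-1)).2.image (WStep.W :: ·)) else ∅) ∪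
       ((FAB l (u+1)).1.image (WStep.S :: ·)))

def FA (l : ℕ) (u : ℤ) : Finset (List WStep) := (FAB l u).1
def FB (l : ℕ) (u : ℤ) : Finset (List WStep) := (FAB l u).2

lemma FA_zero (u : ℤ) : FA 0 u = if u = 0 then {([] : List WStep)} else ∅ := rfl
lemma FB_zero (u : ℤ) : FB 0 u = ∅ := rfl
lemma FA_succ (l : ℕ) (u : ℤ) : FA (l+1) u =
    ((FA l (u+1)).image (WStep.E :: ·)) ∪
      (if 1 ≤ u then ((FA l (u-1)).image (WStep.W :: ·)) ∪
        ((FB l (u-1)).image (WStep.N :: ·)) else ∅) := rfl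
lemma FB_succ (l : ℕ) (u : ℤ) : FB (l+1) u =
    (if 1 ≤ u then ((FB l (u-1)).image (WStep.W :: ·)) else ∅) ∪
      ((FA l (u+1)).image (WStep.S :: ·)) := rfl

def FC : ℕ → ℤ → Finset (List PStep)
  | 0, t => if t = 0 then {([] : List PStep)} else ∅
  | (m+1), t => ((FC m (t+1)).image (PStep.E :: ·)) ∪
      (if 2 ≤ t then ((FC m (t-2)).image (PStep.N :: ·)) else ∅)

/-- Membership characterization for FA and FB. -/
lemma memFAB : ∀ (l : ℕ) (u : ℤ), 0 ≤ u → ∀ (w : List WStep),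
    (w ∈ FA l u ↔ (w.length = l ∧ WA u w)) ∧ (w ∈ FB l u ↔ (w.length = l ∧ WB u w)) := by
  intro l
  induction l with
  | zero =>
    intro u hu w
    constructor
    · rw [FA_zero]
      constructor
      · intro hw
        by_cases h0 : u = 0
        · rw [if_pos h0] at hw
          simp at hw
          subst hw h0
          exact ⟨rfl, (WA_nil 0).mpr rfl⟩
        · rw [if_neg h0] at hw; simp at hw
      · rintro ⟨hl, hw⟩
        rw [List.length_eq_zero_iff] at hl
        subst hl
        have := (WA_nil u).mp hw
        simp [this]
    · rw [FB_zero]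
      simp only [Finset.notMem_empty, false_iff, not_and]
      intro hl hw
      rw [List.length_eq_zero_iff] at hl
      subst hl
      exact WB_nil u hw
  | succ l ih =>
    intro u hu w
    constructor
    · rw [FA_succ]
      cases w with
      | nil =>
        constructor
        · intro hw
          exfalso
          simp only [Finset.mem_union, Finset.mem_image] at hw
          rcases hw with ⟨a, -, ha⟩ | hw
          · exact List.cons_ne_nil _ _ ha
          · by_cases h1 : 1 ≤ u
            · rw [if_pos h1] at hw
              simp only [Finset.mem_union, Finset.mem_image] at hw
              rcases hw with ⟨a, -, ha⟩ | ⟨a, -, ha⟩ <;> exact List.cons_ne_nil _ _ ha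
            · rw [if_neg h1] at hw; simp at hw
        · rintro ⟨hl, -⟩; simp at hl
      | cons s t =>
        cases s with
        | E =>
          have hmem : (WStep.E :: t) ∈ ((FA l (u+1)).image (WStep.E :: ·)) ∪
              (if 1 ≤ u then ((FA l (u-1)).image (WStep.W :: ·)) ∪
                ((FB l (u-1)).image (WStep.N :: ·)) else   ∅) ↔ t ∈ FA l (u+1) := by
            by_cases h1 : 1 ≤ u <;>
              simp [h1, Finset.mem_union, Finset.mem_image, List.cons_eq_cons]
          rw [hmem, (ih (u+1) (by omega) t).1, WA_cons_E]
          constructor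
          · rintro ⟨hl, hw⟩; exact ⟨by simp [hl], hu, hw⟩
          · rintro ⟨hl, -, hw⟩; exact ⟨by simpa using hl, hw⟩
        | W =>
          rw [WA_cons_W]
          by_cases h1 : 1 ≤ u
          · have hmem : (WStep.W :: t) ∈ ((FA l (u+1)).image (WStep.E :: ·)) ∪
                (if 1 ≤ u then ((FA l (u-1)).image (WStep.W :: ·)) ∪
                  ((FB l (u-1)).image (WStep.N :: ·)) else ∅) ↔ t ∈ FA l (u-1) := by
              simp [h1, Finset.mem_union, Finset.mem_image, List.cons_eq_cons]
            rw [hmem, (ih (u-1) (by omega) t).1]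
            constructor
            · rintro ⟨hl, hw⟩; exact ⟨by simp [hl], hu, hw⟩
            · rintro ⟨hl, -, hw⟩; exact ⟨by simpa using hl, hw⟩
          · have hmem : (WStep.W :: t) ∉ ((FA l (u+1)).image (WStep.E :: ·)) ∪
                (if 1 ≤ u then ((FA l (u-1)).image (WStep.W :: ·)) ∪
                  ((FB l (u-1)).image (WStep.N :: ·)) else ∅) := by
              simp [h1, Finset.mem_union, Finset.mem_image, List.cons_eq_cons]
            simp only [hmem, false_iff, not_and]
            intro _ _ hw
            exact absurd (WA_nonneg hw) (by omega)
        | N =>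
          rw [WA_cons_N]
          by_cases h1 : 1 ≤ u
          · have hmem : (WStep.N :: t) ∈ ((FA l (u+1)).image (WStep.E :: ·)) ∪
                (if 1 ≤ u then ((FA l (u-1)).image (WStep.W :: ·)) ∪
                  ((FB l (u-1)).image (WStep.N :: ·)) else ∅) ↔ t ∈ FB l (u-1) := by
              simp [h1, Finset.mem_union, Finset.mem_image, List.cons_eq_cons]
            rw [hmem, (ih (u-1) (by omega) t).2]
            constructor
            · rintro ⟨hl, hw⟩; exact ⟨by simp [hl], hu, hw⟩
            · rintro ⟨hl, -, hw⟩; exact ⟨by simpa using hl, hw⟩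
          · have hmem : (WStep.N :: t) ∉ ((FA l (u+1)).image (WStep.E :: ·)) ∪
                (if 1 ≤ u then ((FA l (u-1)).image (WStep.W :: ·)) ∪
                  ((FB l (u-1)).image (WStep.N :: ·)) else ∅) := by
              simp [h1, Finset.mem_union, Finset.mem_image, List.cons_eq_cons]
            simp only [hmem, false_iff, not_and]
            intro _ _ hw
            exact absurd (WB_nonneg hw) (by omega)
        | S =>
          have hmem : (WStep.S :: t) ∉ ((FA l (u+1)).image (WStep.E :: ·)) ∪
              (if 1 ≤ u then ((FA l (u-1)).image (WStep.W :: ·)) ∪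
                ((FB l (u-1)).image (WStep.N :: ·)) else ∅) := by
            by_cases h1 : 1 ≤ u <;>
              simp [h1, Finset.mem_union, Finset.mem_image, List.cons_eq_cons]
          simp only [hmem, false_iff, not_and]
          rintro - hw
          exact WA_cons_S u t hw
    · rw [FB_succ]
      cases w with
      | nil =>
        constructor
        · intro hw
          exfalso
          simp only [Finset.mem_union, Finset.mem_image] at hw
          rcases hw with hw | ⟨a, -, ha⟩
          · by_cases h1 : 1 ≤ u
            · rw [if_pos h1] at hw
              simp only [Finset.mem_image] at hw
              rcases hw with ⟨a, -, ha⟩; exact List.cons_ne_nil _ _ ha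
            · rw [if_neg h1] at hw; simp at hw
          · exact List.cons_ne_nil _ _ ha
        · rintro ⟨hl, -⟩; simp at hl
      | cons s t =>
        cases s with
        | W =>
          by_cases h1 : 1 ≤ u
          · have hmem : (WStep.W :: t) ∈
                (if 1 ≤ u then ((FB l (u-1)).image (WStep.W :: ·)) else ∅) ∪
                  ((FA l (u+1)).image (WStep.S :: ·)) ↔ t ∈ FB l (u-1) := by
              simp [h1, Finset.mem_union, Finset.mem_image, List.cons_eq_cons]
            rw [hmem, (ih (u-1) (by omega) t).2, WB_cons_W]
            constructor
            · rintro ⟨hl, hw⟩; exact ⟨by simp [hl], hu, hw⟩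
            · rintro ⟨hl, -, hw⟩; exact ⟨by simpa using hl, hw⟩
          · have hmem : (WStep.W :: t) ∉
                (if 1 ≤ u then ((FB l (u-1)).image (WStep.W :: ·)) else ∅) ∪
                  ((FA l (u+1)).image (WStep.S :: ·)) := by
              simp [h1, Finset.mem_union, Finset.mem_image, List.cons_eq_cons]
            simp only [hmem, false_iff, not_and]
            rintro - hw
            rw [WB_cons_W] at hw
            exact absurd (WB_nonneg hw.2) (by omega)
        | S =>
          have hmem : (WStep.S :: t) ∈
              (if 1 ≤ u then ((FB l (u-1)).image (WStep.W :: ·)) else ∅) ∪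
                ((FA l (u+1)).image (WStep.S :: ·)) ↔ t ∈ FA l (u+1) := by
            by_cases h1 : 1 ≤ u <;>
              simp [h1, Finset.mem_union, Finset.mem_image, List.cons_eq_cons]
          rw [hmem, (ih (u+1) (by omega) t).1, WB_cons_S]
          constructor
          · rintro ⟨hl, hw⟩; exact ⟨by simp [hl], hu, hw⟩
          · rintro ⟨hl, -, hw⟩; exact ⟨by simpa using hl, hw⟩
        | E =>
          have hmem : (WStep.E :: t) ∉
              (if 1 ≤ u then ((FB l (u-1)).image (WStep.W :: ·)) else ∅) ∪
                ((FA l (u+1)).image (WStep.S :: ·)) := by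
            by_cases h1 : 1 ≤ u <;>
              simp [h1, Finset.mem_union, Finset.mem_image, List.cons_eq_cons]
          simp only [hmem, false_iff, not_and]
          rintro - hw
          exact WB_cons_E u t hw
        | N =>
          have hmem : (WStep.N :: t) ∉
              (if 1 ≤ u then ((FB l (u-1)).image (WStep.W :: ·)) else ∅) ∪
                ((FA l (u+1)).image (WStep.S :: ·)) := by
            by_cases h1 : 1 ≤ u <;>
              simp [h1, Finset.mem_union, Finset.mem_image, List.cons_eq_cons]
          simp only [hmem, false_iff, not_and]
          rintro - hw
          exact WB_cons_N u t hw

/-! ### path-side semantics -/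

def psum (p : List PStep) : ℤ × ℤ := (p.map PStep.vec).sum

@[simp] lemma ppos_zero (p : List PStep) : ppos p 0 = 0 := by simp [ppos]

@[simp] lemma ppos_cons (s : PStep) (p : List PStep) (i : ℕ) :
    ppos (s :: p) (i + 1) = s.vec + ppos p i := by
  simp [ppos, List.take_succ_cons]

lemma ppos_length (p : List PStep) : ppos p p.length = psum p := by
  simp [ppos, psum, List.take_length]

@[simp] lemma psum_nil : psum ([] : List PStep) = 0 := rfl

@[simp] lemma psum_cons (s : PStep) (p : List PStep) : psum (s :: p) = s.vec + psum p := by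
  simp [psum]

def PC (t : ℤ) (p : List PStep) : Prop :=
  ((psum p).1 - 2 * (psum p).2 = -t) ∧ ∀ i ≤ p.length, 2 * (ppos p i).2 ≤ t + (ppos p i).1

lemma PC_nonneg {t : ℤ} {p : List PStep} (h : PC t p) : 0 ≤ t := by
  have := h.2 0 (Nat.zero_le _)
  simpa using this

lemma PC_nil (t : ℤ) : PC t [] ↔ t = 0 := by
  constructor
  · rintro ⟨h1, -⟩; simp at h1; omega
  · rintro rfl
    refine ⟨by simp, fun i hi => ?_⟩
    simp at hi; simp [hi]

lemma PC_cons_E (t : ℤ) (p : List PStep) : PC t (.E :: p) ↔ 0 ≤ t ∧ PC (t+1) p := by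
  unfold PC
  rw [psum_cons]
  constructor
  · rintro ⟨h1, h2⟩
    have h0 : (0:ℤ) ≤ t := by have := h2 0 (Nat.zero_le _); simpa using this
    refine ⟨h0, ?_, fun i hi => ?_⟩
    · simp only [PStep.vec, Prod.fst_add, Prod.snd_add] at h1; omega
    · have := h2 (i+1) (by simpa using Nat.succ_le_succ hi)
      rw [ppos_cons] at this
      simp only [PStep.vec, Prod.fst_add, Prod.snd_add] at this
      omega
  · rintro ⟨h0, h1, h2⟩
    refine ⟨by simp only [PStep.vec, Prod.fst_add, Prod.snd_add]; omega, fun i hi => ?_⟩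
    cases i with
    | zero => simpa using h0
    | succ i =>
      have := h2 i (by simpa using Nat.lt_succ_iff.mp (Nat.lt_of_succ_le hi))
      rw [ppos_cons]
      simp only [PStep.vec, Prod.fst_add, Prod.snd_add]
      omega

lemma PC_cons_N (t : ℤ) (p : List PStep) : PC t (.N :: p) ↔ 0 ≤ t ∧ PC (t-2) p := by
  unfold PC
  rw [psum_cons]
  constructor
  · rintro ⟨h1, h2⟩
    have h0 : (0:ℤ) ≤ t := by have := h2 0 (Nat.zero_le _); simpa using this
    refine ⟨h0, ?_, fun i hi => ?_⟩
    · simp only [PStep.vec, Prod.fst_add, Prod.snd_add] at h1; omega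
    · have := h2 (i+1) (by simpa using Nat.succ_le_succ hi)
      rw [ppos_cons] at this
      simp only [PStep.vec, Prod.fst_add, Prod.snd_add] at this
      omega
  · rintro ⟨h0, h1, h2⟩
    refine ⟨by simp only [PStep.vec, Prod.fst_add, Prod.snd_add]; omega, fun i hi => ?_⟩
    cases i with
    | zero => simpa using h0
    | succ i =>
      have := h2 i (by simpa using Nat.lt_succ_iff.mp (Nat.lt_of_succ_le hi))
      rw [ppos_cons]
      simp only [PStep.vec, Prod.fst_add, Prod.snd_add]
      omega

lemma memFC : ∀ (m : ℕ) (t : ℤ), 0 ≤ t → ∀ (p : List PStep),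
    p ∈ FC m t ↔ (p.length = m ∧ PC t p) := by
  intro m
  induction m with
  | zero =>
    intro t ht p
    rw [show FC 0 t = if t = 0 then {([] : List PStep)} else ∅ from rfl]
    constructor
    · intro hp
      by_cases h0 : t = 0
      · rw [if_pos h0] at hp
        simp at hp
        subst hp h0
        exact ⟨rfl, (PC_nil 0).mpr rfl⟩
      · rw [if_neg h0] at hp; simp at hp
    · rintro ⟨hl, hp⟩
      rw [List.length_eq_zero_iff] at hl
      subst hl
      simp [(PC_nil t).mp hp]
  | succ m ih =>
    intro t ht p
    rw [show FC (m+1) t = ((FC m (t+1)).image (PStep.E :: ·)) ∪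
      (if 2 ≤ t then ((FC m (t-2)).image (PStep.N :: ·)) else ∅) from rfl]
    cases p with
    | nil =>
      constructor
      · intro hp
        exfalso
        simp only [Finset.mem_union, Finset.mem_image] at hp
        rcases hp with ⟨a, -, ha⟩ | hp
        · exact List.cons_ne_nil _ _ ha
        · by_cases h2 : 2 ≤ t
          · rw [if_pos h2] at hp
            simp only [Finset.mem_image] at hp
            rcases hp with ⟨a, -, ha⟩; exact List.cons_ne_nil _ _ ha
          · rw [if_neg h2] at hp; simp at hp
      · rintro ⟨hl, -⟩; simp at hl
    | cons s q =>
      cases s with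
      | E =>
        have hmem : (PStep.E :: q) ∈ ((FC m (t+1)).image (PStep.E :: ·)) ∪
            (if 2 ≤ t then ((FC m (t-2)).image (PStep.N :: ·)) else ∅) ↔ q ∈ FC m (t+1) := by
          by_cases h2 : 2 ≤ t <;>
            simp [h2, Finset.mem_union, Finset.mem_image, List.cons_eq_cons]
        rw [hmem, ih (t+1) (by omega) q, PC_cons_E]
        constructor
        · rintro ⟨hl, hp⟩; exact ⟨by simp [hl], ht, hp⟩
        · rintro ⟨hl, -, hp⟩; exact ⟨by simpa using hl, hp⟩
      | N =>
        rw [PC_cons_N]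
        by_cases h2 : 2 ≤ t
        · have hmem : (PStep.N :: q) ∈ ((FC m (t+1)).image (PStep.E :: ·)) ∪
              (if 2 ≤ t then ((FC m (t-2)).image (PStep.N :: ·)) else ∅) ↔ q ∈ FC m (t-2) := by
            simp [h2, Finset.mem_union, Finset.mem_image, List.cons_eq_cons]
          rw [hmem, ih (t-2) (by omega) q]
          constructor
          · rintro ⟨hl, hp⟩; exact ⟨by simp [hl], ht, hp⟩
          · rintro ⟨hl, -, hp⟩; exact ⟨by simpa using hl, hp⟩
        · have hmem : (PStep.N :: q) ∉ ((FC m (t+1)).image (PStep.E :: ·)) ∪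
              (if 2 ≤ t then ((FC m (t-2)).image (PStep.N :: ·)) else ∅) := by
            simp [h2, Finset.mem_union, Finset.mem_image, List.cons_eq_cons]
          simp only [hmem, false_iff, not_and]
          intro _ _ hp
          exact absurd (PC_nonneg hp) (by omega)

/-! ### card recurrences and emptiness -/

lemma disj_image_cons {α : Type*} [DecidableEq α] {a b : α} (h : a ≠ b)
    (s t : Finset (List α)) : Disjoint (s.image (a :: ·)) (t.image (b :: ·)) := by
  rw [Finset.disjoint_left]
  rintro x hx hy
  simp only [Finset.mem_image] at hx hy
  obtain ⟨p, -, rfl⟩ := hx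
  obtain ⟨q, -, hq⟩ := hy
  exact h ((List.cons_eq_cons.mp hq).1).symm

lemma cardFA_succ (l : ℕ) (u : ℤ) : (FA (l+1) u).card =
    (FA l (u+1)).card + (if 1 ≤ u then (FA l (u-1)).card + (FB l (u-1)).card else 0) := by
  rw [FA_succ]
  by_cases h1 : 1 ≤ u
  · rw [if_pos h1, if_pos h1]
    rw [Finset.card_union_of_disjoint, Finset.card_union_of_disjoint]
    · simp [Finset.card_image_of_injective _ (List.cons_injective)]
    · exact disj_image_cons (by simp) _ _
    · exact Finset.disjoint_union_right.mpr
        ⟨disj_image_cons (by simp) _ _, disj_image_cons (by simp) _ _⟩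
  · rw [if_neg h1, if_neg h1]
    simp [Finset.card_image_of_injective _ (List.cons_injective)]

lemma cardFB_succ (l : ℕ) (u : ℤ) : (FB (l+1) u).card =
    (if 1 ≤ u then (FB l (u-1)).card else 0) + (FA l (u+1)).card := by
  rw [FB_succ]
  by_cases h1 : 1 ≤ u
  · rw [if_pos h1, if_pos h1]
    rw [Finset.card_union_of_disjoint (disj_image_cons (by simp) _ _)]
    simp [Finset.card_image_of_injective _ (List.cons_injective)]
  · rw [if_neg h1, if_neg h1]
    simp [Finset.card_image_of_injective _ (List.cons_injective)]

lemma cardFC_succ (m : ℕ) (t : ℤ) : (FC (m+1) t).card =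
    (FC m (t+1)).card + (if 2 ≤ t then (FC m (t-2)).card else 0) := by
  rw [show FC (m+1) t = ((FC m (t+1)).image (PStep.E :: ·)) ∪
      (if 2 ≤ t then ((FC m (t-2)).image (PStep.N :: ·)) else ∅) from rfl]
  by_cases h2 : 2 ≤ t
  · rw [if_pos h2, if_pos h2]
    rw [Finset.card_union_of_disjoint (disj_image_cons (by simp) _ _)]
    simp [Finset.card_image_of_injective _ (List.cons_injective)]
  · rw [if_neg h2, if_neg h2]
    simp [Finset.card_image_of_injective _ (List.cons_injective)]

lemma FAB_empty : ∀ (l : ℕ) (u : ℤ),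
    ((l:ℤ) < u → FA l u = ∅) ∧ ((l:ℤ) < u + 2 → FB l u = ∅) := by
  intro l
  induction l with
  | zero =>
    intro u
    exact ⟨fun h => by rw [FA_zero, if_neg (by omega)], fun _ => rfl⟩
  | succ l ih =>
    intro u
    constructor
    · intro h
      rw [FA_succ, (ih (u+1)).1 (by push_cast; omega)]
      have h2 : (1:ℤ) ≤ u := by push_cast at h; omega
      rw [if_pos h2, (ih (u-1)).1 (by push_cast at h ⊢; omega),
        (ih (u-1)).2 (by push_cast at h ⊢; omega)]
      simp
    · intro h
      rw [FB_succ, (ih (u+1)).1 (by push_cast at h ⊢; omega)]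
      by_cases h1 : 1 ≤ u
      · rw [if_pos h1, (ih (u-1)).2 (by push_cast at h ⊢; omega)]
        simp
      · rw [if_neg h1]
        simp

lemma FC_empty : ∀ (m : ℕ) (t : ℤ), (2*(m:ℤ) < t) → FC m t = ∅ := by
  intro m
  induction m with
  | zero =>
    intro t h
    rw [show FC 0 t = if t = 0 then {([] : List PStep)} else ∅ from rfl, if_neg (by omega)]
  | succ m ih =>
    intro t h
    rw [show FC (m+1) t = ((FC m (t+1)).image (PStep.E :: ·)) ∪
      (if 2 ≤ t then ((FC m (t-2)).image (PStep.N :: ·)) else ∅) from rfl]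
    rw [ih (t+1) (by push_cast at h ⊢; omega)]
    by_cases h2 : 2 ≤ t
    · rw [if_pos h2, ih (t-2) (by push_cast at h ⊢; omega)]
      simp
    · rw [if_neg h2]
      simp

/-! ### the bridging identity -/

lemma bridge : ∀ (l : ℕ),
    (∀ (u : ℤ) (m : ℕ), 0 ≤ u → 3*(l:ℤ) = 2*(m:ℤ) + u →
      (FA l u).card = (FC m (2*u)).card) ∧
    (∀ (u : ℤ) (m : ℕ), 0 ≤ u → 3*(l:ℤ) = 2*(m:ℤ) + u + 2 →
      (FB l u).card = (FC m (2*u+1)).card) := by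
  intro l
  induction l with
  | zero =>
    constructor
    · intro u m hu h
      have hu0 : u = 0 := by omega
      have hm0 : m = 0 := by omega
      subst hu0 hm0
      rw [FA_zero, if_pos rfl, show FC 0 (2*0) = if (2*0:ℤ) = 0 then {([] : List PStep)}
        else ∅ from rfl, if_pos (by norm_num)]
      rfl
    · intro u m hu h
      exfalso; omega
  | succ l ih =>
    obtain ⟨ihA, ihB⟩ := ih
    constructor
    · intro u m hu h
      by_cases hle : u ≤ (l:ℤ) + 1
      · -- main case
        by_cases h0 : u = 0
        · subst h0
          have hm : 2 ≤ m := by omega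
          obtain ⟨k, rfl⟩ : ∃ k, m = k + 2 := ⟨m - 2, by omega⟩
          rw [cardFA_succ, if_neg (by norm_num)]
          rw [show ((k:ℕ)+2 : ℕ) = (k+1)+1 from rfl, cardFC_succ (k+1) (2*0)]
          rw [if_neg (by norm_num), cardFC_succ k (2*0+1), if_neg (by norm_num)]
          have e1 := ihA 1 k (by norm_num) (by push_cast at h ⊢; omega)
          have e2 : (2*0 + 1 + 1 : ℤ) = 2*1 := by ring
          rw [e2]
          norm_num at e1 ⊢
          omega
        · -- u ≥ 1
          have hu1 : (1:ℤ) ≤ u := by omega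
          by_cases hl0 : l = 0
          · -- tiny case: l = 0, u = 1, m = 1
            subst hl0
            have hu' : u = 1 := by omega
            have hm' : m = 1 := by omega
            subst hu' hm'
            rw [cardFA_succ, if_pos (by norm_num)]
            rw [FA_zero, FA_zero, FB_zero, if_neg (by norm_num), if_pos (by norm_num)]
            rw [show (1:ℕ) = 0+1 from rfl, cardFC_succ 0 (2*1), if_pos (by norm_num)]
            rw [show FC 0 (2*1+1) = if (2*1+1:ℤ) = 0 then {([] : List PStep)} else ∅ from rfl,
              if_neg (by norm_num),
              show FC 0 (2*1-2) = if (2*1-2:ℤ) = 0 then {([] : List PStep)} else ∅ from rfl,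
              if_pos (by norm_num)]
            simp
          · -- l ≥ 1, u ≥ 1: generic two-step expansion
            have hm : 2 ≤ m := by omega
            obtain ⟨k, rfl⟩ : ∃ k, m = k + 2 := ⟨m - 2, by omega⟩
            rw [cardFA_succ, if_pos hu1]
            rw [show ((k:ℕ)+2 : ℕ) = (k+1)+1 from rfl, cardFC_succ (k+1) (2*u),
              if_pos (by omega), cardFC_succ k (2*u+1), if_pos (by omega)]
            have e1 := ihA (u+1) k (by omega) (by push_cast at h ⊢; omega)
            have e2 := ihA (u-1) (k+1) (by omega) (by push_cast at h ⊢; omega)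
            have e3 := ihB (u-1) k (by omega) (by push_cast at h ⊢; omega)
            have r1 : (2*(u+1) : ℤ) = 2*u+1+1 := by ring
            have r2 : (2*(u-1) : ℤ) = 2*u-2 := by ring
            have r3 : (2*(u-1)+1 : ℤ) = 2*u+1-2 := by ring
            rw [r1] at e1; rw [r2] at e2; rw [r3] at e3
            omega
      · -- empty case: u ≥ l + 2
        rw [(FAB_empty (l+1) u).1 (by push_cast; omega),
          FC_empty m (2*u) (by push_cast at h ⊢; omega)]
        rfl
    · intro u m hu h
      by_cases hle : u ≤ (l:ℤ) - 1
      · -- main case (u = l impossible by parity, u ≥ l+1 empty)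
        have hm : 1 ≤ m := by omega
        obtain ⟨k, rfl⟩ : ∃ k, m = k + 1 := ⟨m - 1, by omega⟩
        by_cases h0 : u = 0
        · subst h0
          rw [cardFB_succ, if_neg (by norm_num)]
          rw [cardFC_succ k (2*0+1), if_neg (by norm_num)]
          have e1 := ihA 1 k (by norm_num) (by push_cast at h ⊢; omega)
          have r1 : (2*0+1+1 : ℤ) = 2*1 := by ring
          rw [r1]
          norm_num at e1 ⊢
          omega
        · have hu1 : (1:ℤ) ≤ u := by omega
          rw [cardFB_succ, if_pos hu1]
          rw [cardFC_succ k (2*u+1), if_pos (by omega)]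
          have e1 := ihA (u+1) k (by omega) (by push_cast at h ⊢; omega)
          have e2 := ihB (u-1) k (by omega) (by push_cast at h ⊢; omega)
          have r1 : (2*(u+1) : ℤ) = 2*u+1+1 := by ring
          have r2 : (2*(u-1)+1 : ℤ) = 2*u+1-2 := by ring
          rw [r1] at e1; rw [r2] at e2
          omega
      · -- empty case
        rw [(FAB_empty (l+1) u).2 (by push_cast; omega),
          FC_empty m (2*u+1) (by push_cast at h ⊢; omega)]
        rfl

/-! ### identification of `IsLWalk` and `IsPPath` with the recursive Finsets -/

lemma psum_coords (p : List PStep) : (psum p).1 + (psum p).2 = (p.length : ℤ) := by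
  induction p with
  | nil => simp
  | cons s q ih =>
    rw [psum_cons]
    cases s <;> simp [PStep.vec, Prod.fst_add, Prod.snd_add] <;> omega

lemma isLWalk_iff (n : ℕ) (w : List WStep) : IsLWalk n w ↔ w ∈ FA (2*n) 0 := by
  rw [(memFAB (2*n) 0 le_rfl w).1]
  unfold IsLWalk WA
  constructor
  · rintro ⟨hl, he, hh, hb⟩
    refine ⟨hl, ?_, fun i hi => by simpa using hh i hi, fun i hi => ?_⟩
    · rw [wpos_length] at he
      rw [he]
      simp [Prod.ext_iff]
    · obtain ⟨k, hW, hS⟩ := hb i hi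
      exact ⟨k, fun j hj => by rw [List.getElem?_drop]; exact hW j hj,
        by rw [List.getElem?_drop]; exact hS⟩
  · rintro ⟨hl, ⟨he, hh, hb⟩⟩
    refine ⟨hl, ?_, fun i hi => by simpa using hh i hi, fun i hi => ?_⟩
    · rw [wpos_length, he]
      simp [Prod.ext_iff]
    · obtain ⟨k, hW, hS⟩ := hb i hi
      exact ⟨k, fun j hj => by rw [← List.getElem?_drop]; exact hW j hj,
        by rw [← List.getElem?_drop]; exact hS⟩

lemma isPPath_iff (n : ℕ) (p : List PStep) : IsPPath n p ↔ p ∈ FC (3*n) 0 := by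
  rw [memFC (3*n) 0 le_rfl p]
  unfold IsPPath PC
  constructor
  · rintro ⟨he, hh⟩
    rw [ppos_length] at he
    have hc := psum_coords p
    rw [he] at hc
    simp only [he]
    have hlen : p.length = 3*n := by
      have : (p.length : ℤ) = 3*(n:ℤ) := by
        simp only at hc; push_cast at hc ⊢; omega
      exact_mod_cast this
    refine ⟨hlen, by push_cast; ring, fun i hi => by simpa using hh i hi⟩
  · rintro ⟨hl, he, hh⟩
    have hc := psum_coords p
    rw [hl] at hc
    push_cast at hc
    refine ⟨?_, fun i hi => by simpa using hh i hi⟩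
    rw [ppos_length]
    have h1 : (psum p).1 = 2*(n:ℤ) := by omega
    have h2 : (psum p).2 = (n:ℤ) := by omega
    rw [Prod.ext_iff]
    exact ⟨h1, h2⟩

/-- For every `n ≥ 0`, `|L_n| = |P_n|`: the number of closed lattice
walks in `L_n` equals the number of lattice paths from `(0,0)` to `(2n, n)` with steps
`E, N` never going above the line `y = x/2`. -/
theorem lattice_walks_eq_lattice_paths (n : ℕ) :
    Nat.card {w : List WStep // IsLWalk n w} =
      Nat.card {p : List PStep // IsPPath n p} := by
  have hL : Nat.card {w : List WStep // IsLWalk n w} = (FA (2*n) 0).card := by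
    rw [Nat.card_congr (Equiv.subtypeEquivRight (isLWalk_iff n))]
    rw [Nat.card_eq_fintype_card]
    exact Fintype.card_coe _
  have hP : Nat.card {p : List PStep // IsPPath n p} = (FC (3*n) 0).card := by
    rw [Nat.card_congr (Equiv.subtypeEquivRight (isPPath_iff n))]
    rw [Nat.card_eq_fintype_card]
    exact Fintype.card_coe _
  rw [hL, hP]
  have := (bridge (2*n)).1 0 (3*n) le_rfl (by push_cast; ring)
  simpa using this
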